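/- Let λ be a p-regular partition of n > 1 such that for every row j < i, removing a removable node in row j yields a p-singular partition, where i is the minimal row index with λ - ε_i p-regular. Then λ has the form λ = (b^a, (b-1)^{p-1}, (b-2)^{p-1}, ..., (b-t+1)^{p-1}, (b-t)^{p-1}, ...) for some 1 ≤ a < p, b > 0, t ≥ 0, where row i is the last row of the block of parts equal to b - t. -/

import Mathlib

def IsPartWithin (n : ℕ) (f : ℕ → ℕ) : Prop :=
  (∀ i j, i ≤ j → f j ≤ f i) ∧ ∀ i, n ≤ i → f i = 0

def psize (n : ℕ) (f : ℕ → ℕ) : ℕ := ∑ i ∈ Finset.range n, f i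

/-- `f` is `p`-regular: no nonzero part is repeated `p` or more times
(0-indexed rows: `p` equal rows `i, …, i + (p-1)`). -/
def PRegular (p : ℕ) (f : ℕ → ℕ) : Prop :=
  ¬ ∃ i, 0 < f (i + (p - 1)) ∧ f i = f (i + (p - 1))

/-- `λ - ε_i`: remove one box from (0-indexed) row `i`. -/
def removeBox (f : ℕ → ℕ) (i : ℕ) : ℕ → ℕ :=
  fun j => if j = i then f i - 1 else f j

/-- from the proof of Lemma 6.5: let `λ` be a `p`-regular partition of
`n > 1`, and let `i` (1-indexed) be a row with a removable node such that `λ - ε_i` is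
`p`-regular, while for every row `j < i` removing a removable node in row `j` yields a
`p`-singular partition.  Then `λ = (b^a, (b-1)^{p-1}, …, (b-t+1)^{p-1}, (b-t)^{p-1}, …)`
for some `1 ≤ a < p`, `b > 0`, `t ≥ 0`, where row `i = a + t(p-1)` is the last row of
the block of parts equal to `b - t`. -/
theorem shape_of_minimal_removable_row (p : ℕ) (hp : p.Prime) (n : ℕ) (hn : 1 < n)
    (lam : ℕ → ℕ) (hpart : IsPartWithin n lam) (hsz : psize n lam = n)
    (hreg : PRegular p lam)
    (i : ℕ) (hi1 : 1 ≤ i)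
    (hrem : lam i < lam (i - 1))
    (hregrem : PRegular p (removeBox lam (i - 1)))
    (hmin : ∀ j, 1 ≤ j → j < i → lam j < lam (j - 1) → ¬ PRegular p (removeBox lam (j - 1))) :
    ∃ a b t : ℕ, 1 ≤ a ∧ a < p ∧ 0 < b ∧ i = a + t * (p - 1) ∧
      (∀ j, 1 ≤ j → j ≤ a → lam (j - 1) = b) ∧
      (∀ s j, 1 ≤ s → s ≤ t → a + (s - 1) * (p - 1) < j → j ≤ a + s * (p - 1) →
        lam (j - 1) = b - s) := by

  obtain ⟨hmono, hzero⟩ := hpart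
  have hp2 := hp.two_le
  have hq : 1 ≤ p - 1 := by omega
  -- b = lam 0 > 0
  have hb0 : 0 < lam 0 := by
    by_contra h
    push_neg at h
    have hall : ∀ j, lam j = 0 := fun j => by
      have := hmono 0 j (Nat.zero_le _); omega
    have : psize n lam = 0 := Finset.sum_eq_zero (fun j _ => hall j)
    omega
  have hex : ∃ k, lam k < lam 0 := ⟨n, by rw [hzero n le_rfl]; exact hb0⟩
  set b := lam 0 with hb
  set a := Nat.find hex with ha
  have haspec : lam a < b := Nat.find_spec hex
  have hblock0 : ∀ j, j < a → lam j = b := fun j hj => by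
    have h1 := Nat.find_min hex hj
    have h2 := hmono 0 j (Nat.zero_le _)
    omega
  have ha1 : 1 ≤ a := by
    rcases Nat.eq_zero_or_pos a with h | h
    · rw [h] at haspec; omega
    · exact h
  have hap : a < p := by
    by_contra h
    push_neg at h
    exact hreg ⟨0, by
      rw [Nat.zero_add, hblock0 (p-1) (by omega)]
      exact ⟨hb0, rfl⟩⟩
  -- one-step lemma
  have step : ∀ r c, 1 ≤ r → r < i → lam (r-1) = c → lam r < c →
      (0 < c - 1 ∧ ∀ j, r ≤ j → j < r + (p-1) → lam j = c - 1) := by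
    intro r c hr1 hri hrc hrlt
    have hsing := hmin r hr1 hri (by rw [hrc]; exact hrlt)
    rw [PRegular, not_not] at hsing
    obtain ⟨i₀, hpos, heq⟩ := hsing
    simp only [removeBox] at hpos heq
    by_cases h1 : i₀ = r - 1
    · -- the new block
      subst h1
      have hne : (r-1) + (p-1) ≠ r - 1 := by omega
      rw [if_neg hne] at hpos heq
      rw [if_pos rfl] at heq
      rw [hrc] at heq
      have hc1 : 0 < c - 1 := by omega
      refine ⟨hc1, fun j hj1 hj2 => ?_⟩
      have hle1 : lam ((r-1)+(p-1)) ≤ lam j := hmono j _ (by omega)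
      have hle2 : lam j ≤ lam r := hmono r j hj1
      omega
    · by_cases h2 : i₀ + (p-1) = r - 1
      · -- endpoint at r-1 : impossible
        rw [if_neg h1] at heq
        rw [h2, if_pos rfl] at hpos heq
        rw [hrc] at hpos heq
        have : lam (r-1) ≤ lam i₀ := hmono i₀ (r-1) (by omega)
        omega
      · -- no change at all : contradicts regularity of lam
        rw [if_neg h1] at heq
        rw [if_neg h2] at hpos heq
        exact absurd ⟨i₀, hpos, heq⟩ hreg
  -- main block induction
  have H : ∀ s, a + s*(p-1) < i →
      0 < b - (s+1) ∧ ∀ j, a + s*(p-1) ≤ j → j < a + s*(p-1) + (p-1) →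
        lam j = b - (s+1) := by
    intro s
    induction s with
    | zero =>
      intro hsi
      simp only [Nat.zero_mul, Nat.add_zero] at hsi ⊢
      have := step a b ha1 hsi (hblock0 (a-1) (by omega)) haspec
      exact this
    | succ s ih =>
      rw [Nat.succ_mul]
      intro hsi
      obtain ⟨hpos, hvals⟩ := ih (by omega)
      set m := s * (p-1) with hm
      have hlam1 : lam (a + m + (p-1) - 1) = b - (s+1) :=
        hvals _ (by omega) (by omega)
      have hlam0 : lam (a + m) = b - (s+1) := hvals _ le_rfl (by omega)
      have hdrop : lam (a + m + (p-1)) < b - (s+1) := by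
        by_contra hcon
        push_neg at hcon
        have hle : lam (a + m + (p-1)) ≤ lam (a+m) := hmono _ _ (by omega)
        have heq2 : lam (a + m + (p-1)) = b - (s+1) := by omega
        exact hreg ⟨a + m, by rw [heq2, hlam0]; exact ⟨hpos, rfl⟩⟩
      have hst := step (a + m + (p-1)) (b - (s+1)) (by omega) (by omega) hlam1 hdrop
      obtain ⟨h1, h2⟩ := hst
      exact ⟨by omega, fun j hj1 hj2 => by rw [h2 j (by omega) (by omega)]; omega⟩
  -- a ≤ i
  have hai : a ≤ i := by
    by_contra h
    push_neg at h
    have e1 : lam i = b := hblock0 i h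
    have e2 : lam (i-1) = b := hblock0 (i-1) (by omega)
    omega
  -- i = a + t*(p-1)
  set t := (i - a) / (p - 1) with ht
  have hdm := Nat.div_add_mod (i - a) (p - 1)
  have hmodlt : (i - a) % (p - 1) < p - 1 := Nat.mod_lt _ (by omega)
  have hieq : i = a + t * (p - 1) := by
    by_contra hne
    have hmul : (p-1) * t = t * (p-1) := Nat.mul_comm _ _
    set m := t * (p - 1) with hm
    rw [hmul] at hdm
    have hmod0 : 0 < (i - a) % (p - 1) := by omega
    have hlt : a + m < i := by omega
    obtain ⟨_, hvals⟩ := H t hlt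
    have e1 : lam i = b - (t+1) := hvals i (by omega) (by omega)
    have e2 : lam (i-1) = b - (t+1) := hvals (i-1) (by omega) (by omega)
    omega
  refine ⟨a, b, t, ha1, hap, hb0, hieq, ?_, ?_⟩
  · intro j hj1 hj2
    exact hblock0 (j-1) (by omega)
  · intro s j hs1 hst hj1 hj2
    obtain ⟨s', rfl⟩ : ∃ s', s = s' + 1 := ⟨s - 1, by omega⟩
    have hsm : s' * (p-1) < t * (p-1) :=
      Nat.mul_lt_mul_of_lt_of_le (by omega) le_rfl (by omega)
    have hlt : a + s' * (p-1) < i := by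
      rw [hieq]; omega
    obtain ⟨_, hvals⟩ := H s' hlt
    have e1 : lam (j-1) = b - (s'+1) := by
      apply hvals
      · simp only [Nat.add_sub_cancel] at hj1; omega
      · rw [Nat.succ_mul] at hj2; omega
    rw [e1]
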